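/- For every real number a ≥ 2 and every integer m ≥ 2, one has a^(m(m+1)/2) · (1 - a⁻¹ - a⁻²) ≤ ∏_{i=1}^m (a^i - 1) ≤ a^(m(m+1)/2). -/
import Mathlib

lemma aux_prod_lb (q : ℝ) (hq0 : 0 ≤ q) (hq1 : q ≤ 1) :
    ∀ m, 2 ≤ m → 1 - q - q ^ 2 + q ^ (m + 1) ≤ ∏ i ∈ Finset.Icc 1 m, (1 - q ^ i) := by
  intro m hm
  induction m, hm using Nat.le_induction with
  | base =>
    rw [show (2:ℕ) = 1 + 1 from rfl, Finset.prod_Icc_succ_top (by norm_num),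
      Finset.Icc_self, Finset.prod_singleton]
    ring_nf
    nlinarith [pow_le_one₀ hq0 hq1 (n := 2)]
  | succ n hn ih =>
    rw [Finset.prod_Icc_succ_top (by omega)]
    have h1 : q ^ (n + 1) ≤ q ^ 2 := pow_le_pow_of_le_one hq0 hq1 (by omega)
    have h2 : (0:ℝ) ≤ q ^ (n + 1) := pow_nonneg hq0 _
    have h3 : q ^ (n + 1) ≤ 1 := pow_le_one₀ hq0 hq1
    have key : 1 - q - q ^ 2 + q ^ (n + 1 + 1) ≤
        (1 - q - q ^ 2 + q ^ (n + 1)) * (1 - q ^ (n + 1)) := by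
      have h4 : q ^ (n + 1 + 1) = q ^ (n + 1) * q := by ring
      nlinarith [mul_le_mul_of_nonneg_left h1 h2]
    exact key.trans (mul_le_mul_of_nonneg_right ih (by linarith))

lemma aux_sum_icc (m : ℕ) : ∑ i ∈ Finset.Icc 1 m, i = m * (m + 1) / 2 := by
  induction m with
  | zero => rfl
  | succ n ih =>
    rw [Finset.sum_Icc_succ_top (by omega), ih]
    have h : (n + 1) * (n + 1 + 1) = n * (n + 1) + 2 * (n + 1) := by ring
    omega

/-- For every real `a ≥ 2` and integer `m ≥ 2`,
`a^(m(m+1)/2) (1 - a⁻¹ - a⁻²) ≤ ∏_{i=1}^m (a^i - 1) ≤ a^(m(m+1)/2)`. -/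
theorem stmt_0 (a : ℝ) (m : ℕ) (ha : 2 ≤ a) (hm : 2 ≤ m) :
    a ^ (m * (m + 1) / 2) * (1 - a⁻¹ - (a ^ 2)⁻¹) ≤
      ∏ i ∈ Finset.Icc 1 m, (a ^ i - 1) ∧
    ∏ i ∈ Finset.Icc 1 m, (a ^ i - 1) ≤ a ^ (m * (m + 1) / 2) := by
  have ha0 : (0:ℝ) < a := by linarith
  have hane : a ≠ 0 := ne_of_gt ha0
  have hq0 : (0:ℝ) ≤ a⁻¹ := by positivity
  have hq1 : a⁻¹ ≤ 1 := by
    rw [inv_le_one_iff₀]; right; linarith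
  have hpow : a ^ (m * (m + 1) / 2) = ∏ i ∈ Finset.Icc 1 m, a ^ i := by
    rw [Finset.prod_pow_eq_pow_sum, aux_sum_icc]
  have hfac : ∀ i ∈ Finset.Icc 1 m, a ^ i - 1 = a ^ i * (1 - (a⁻¹) ^ i) := by
    intro i _
    rw [mul_sub, mul_one, ← mul_pow, mul_inv_cancel₀ hane, one_pow]
  constructor
  · have h1 : a ^ (m * (m + 1) / 2) * (1 - a⁻¹ - (a⁻¹) ^ 2 + (a⁻¹) ^ (m + 1)) ≤
        ∏ i ∈ Finset.Icc 1 m, (a ^ i - 1) := by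
      rw [Finset.prod_congr rfl hfac, Finset.prod_mul_distrib, ← hpow]
      exact mul_le_mul_of_nonneg_left (aux_prod_lb a⁻¹ hq0 hq1 m hm) (by positivity)
    refine le_trans ?_ h1
    have : ((a:ℝ) ^ 2)⁻¹ = (a⁻¹) ^ 2 := by rw [inv_pow]
    rw [this]
    have hp : (0:ℝ) ≤ (a⁻¹) ^ (m + 1) := by positivity
    have hA : (0:ℝ) ≤ a ^ (m * (m + 1) / 2) := by positivity
    nlinarith
  · rw [hpow]
    apply Finset.prod_le_prod
    · intro i hi
      simp only [Finset.mem_Icc] at hi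
      have : (1:ℝ) ≤ a ^ i := one_le_pow₀ (by linarith)
      linarith
    · intro i _
      linarith [pow_pos ha0 i]
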